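/- arXiv:2406.12989 — 2 statements merged into one kernel-verified Lean document; each statement's English description precedes it below -/
import Mathlib

section
/- Let d ≥ 1 be an integer and let T be the complete binary tree (q = 2) of depth d. Then Φ_V(T) ≥ ⌊(d − ⌈log₂(3d)⌉)/2⌋, and moreover ⌊(d − ⌈log₂(3d)⌉)/2⌋ ≥ (d − log₂(d))/2 − (3 + log₂(3))/2. -/
open scoped Classical

/-- A vertex of the complete `q`-ary tree of depth `d`: a sequence over `Fin q`
of length at most `d`. -/
def QV (q d : ℕ) : Type := {l : List (Fin q) // l.length ≤ d}

instance (q d : ℕ) : Finite (QV q d) :=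
  (List.finite_length_le (Fin q) d).to_subtype

/-- The complete `q`-ary tree of depth `d`: two vertices are adjacent exactly when
one is obtained from the other by appending a single element. -/
def qTree (q d : ℕ) : SimpleGraph (QV q d) where
  Adj u v := (∃ a : Fin q, v.val = u.val ++ [a]) ∨ (∃ a : Fin q, u.val = v.val ++ [a])
  symm := ⟨by intro u v h; tauto⟩
  loopless := ⟨by
    rintro u (⟨a, ha⟩ | ⟨a, ha⟩) <;>
    · have := congrArg List.length ha
      simp at this⟩

/-- The vertex border `δ(S)`: vertices outside `S` with a neighbour in `S`. -/
def vertexBorder {V : Type*} (G : SimpleGraph V) (S : Set V) : Set V :=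
  {v | v ∉ S ∧ ∃ u ∈ S, G.Adj u v}

/-- `Φ_V(G, s)`: the minimum border size over vertex sets of size `s`. -/
noncomputable def isoProfile {V : Type*} (G : SimpleGraph V) (s : ℕ) : ℕ :=
  sInf ((fun S => (vertexBorder G S).ncard) '' {S : Set V | S.ncard = s})

/-- `Φ_V(G)`: the vertex-isoperimetric peak, `max_{0 ≤ s ≤ |V|} Φ_V(G, s)`. -/
noncomputable def isoPeak {V : Type*} (G : SimpleGraph V) : ℕ :=
  sSup (isoProfile G '' Set.Icc 0 (Nat.card V))

/-- The vertex separation number: for each linear layout (a bijection from the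
vertices to `{1, …, |V|}`, here modelled as `V ≃ Fin |V|`) take the maximum
border size of its prefix sets, then minimize over layouts. -/
noncomputable def vsNum {V : Type*} (G : SimpleGraph V) : ℕ :=
  sInf {n | ∃ L : V ≃ Fin (Nat.card V),
    n = sSup {m | ∃ i : Fin (Nat.card V),
      m = (vertexBorder G {u | (L u : ℕ) ≤ (i : ℕ)}).ncard}}

namespace QV

variable {q d : ℕ}

/-- Level `i`: vertices at distance `i` from the root. -/
def level (q d : ℕ) (i : ℕ) : Set (QV q d) := {w | w.val.length = i}

/-- Descendants of `u` (including `u` itself). -/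
def desc (u : QV q d) : Set (QV q d) := {w | u.val <+: w.val}

/-- `w` is a child of `u`. -/
def IsChildOf (w u : QV q d) : Prop := ∃ a : Fin q, w.val = u.val ++ [a]

/-- `u` is to the left of `v`: same level and lexicographically smaller. -/
def LeftOf (u v : QV q d) : Prop :=
  u.val.length = v.val.length ∧ List.Lex (· < ·) u.val v.val

/-- `u` precedes `v` in the breadth-first ordering of the tree. -/
def Precedes (u v : QV q d) : Prop :=
  u.val.length < v.val.length ∨
    (u.val.length = v.val.length ∧ List.Lex (· < ·) u.val v.val)

/-- `u, v` are swappable in `S`. -/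
def Swappable (S : Set (QV q d)) (u v : QV q d) : Prop :=
  LeftOf u v ∧ ((u ∉ S ∧ v ∈ S) ∨
    (u ∉ S ∧ v ∉ S ∧ (∀ w, IsChildOf w u → w ∉ S) ∧ (∃ w, IsChildOf w v ∧ w ∈ S)))

/-- Level `i` of `S` is left-ordered: no swappable pair in level `i`. -/
def LevelLeftOrdered (S : Set (QV q d)) (i : ℕ) : Prop :=
  ∀ u v : QV q d, u.val.length = i → ¬ Swappable S u v

/-- `S` is left-ordered: every level is left-ordered. -/
def LeftOrdered (S : Set (QV q d)) : Prop := ∀ i, LevelLeftOrdered S i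

/-- The canonical map used in a treeswap between `u` and `v`: a descendant of `u`
is sent to the corresponding descendant of `v` (same suffix), and vice versa;
other vertices are fixed. -/
noncomputable def swapAt (u v w : QV q d) : QV q d :=
  if h : u.val <+: w.val ∧ (v.val ++ w.val.drop u.val.length).length ≤ d then
    ⟨v.val ++ w.val.drop u.val.length, h.2⟩
  else if h' : v.val <+: w.val ∧ (u.val ++ w.val.drop v.val.length).length ≤ d then
    ⟨u.val ++ w.val.drop v.val.length, h'.2⟩
  else w

/-- The treeswap of `S` between `u` and `v`. -/
noncomputable def treeswap (S : Set (QV q d)) (u v : QV q d) : Set (QV q d) :=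
  {w | swapAt u v w ∈ S}

/-- The strict partial order `A < B` on subsets of the tree. -/
def SetPrec (A B : Set (QV q d)) : Prop :=
  (∀ i, (A ∩ level q d i).ncard = (B ∩ level q d i).ncard) ∧
  ∃ v, v ∈ A ∧ v ∉ B ∧ ∀ w, Precedes w v → (w ∈ A ↔ w ∈ B)

/-- `S` is down-compressed. -/
def DownCompressed (S : Set (QV q d)) : Prop :=
  ∀ u ∈ S, ∀ v ∉ S,
    (vertexBorder (qTree q d) S).ncard ≤
      (vertexBorder (qTree q d) ((S ∪ {v}) \ {u})).ncard ∧
    (u.val.length < v.val.length →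
      (vertexBorder (qTree q d) S).ncard <
        (vertexBorder (qTree q d) ((S ∪ {v}) \ {u})).ncard)

/-- `S'` is an aeolian compression of `S`. -/
def IsAeolianCompression (S S' : Set (QV q d)) : Prop :=
  ∃ u v : QV q d, LeftOf u v ∧
    ∃ R A : Set (QV q d), R.Nonempty ∧ R ⊆ S ∧ R ⊆ desc v ∧
      A ⊆ desc u ∧ Disjoint A S ∧ A.ncard = R.ncard ∧
      S' = (S \ R) ∪ A ∧
      S'.ncard = S.ncard ∧
      (vertexBorder (qTree q d) S').ncard ≤ (vertexBorder (qTree q d) S).ncard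

/-- `S` is aeolian-compressed. -/
def AeolianCompressed (S : Set (QV q d)) : Prop :=
  LeftOrdered S ∧ DownCompressed S ∧ ∀ S', ¬ IsAeolianCompression S S'

end QV

namespace IsoAux
open Finset


def blocks : ℕ → ℕ
  | 0 => 0
  | (n+1) => blocks ((n+1)/2) + (if (n+1) % 2 = 1 ∧ ((n+1)/2) % 2 = 0 then 1 else 0)
decreasing_by exact Nat.div_lt_self (Nat.succ_pos n) one_lt_two

lemma blocks_zero : blocks 0 = 0 := by rw [blocks]

lemma blocks_two_mul (n : ℕ) : blocks (2*n) = blocks n := by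
  cases n with
  | zero => rw [show 2*0 = 0 from rfl]
  | succ m =>
    show blocks (2*m+1+1) = blocks (m+1)
    rw [blocks]
    have h1 : (2*m+1+1)/2 = m+1 := by omega
    have h2 : (2*m+1+1) % 2 = 0 := by omega
    simp [h1, h2]

lemma blocks_two_mul_add_one (n : ℕ) :
    blocks (2*n+1) = blocks n + (if n % 2 = 0 then 1 else 0) := by
  rw [blocks]
  have h1 : (2*n+1)/2 = n := by omega
  have h2 : (2*n+1) % 2 = 1 := by omega
  simp [h1, h2]

lemma blocks_one : blocks 1 = 1 := by
  have := blocks_two_mul_add_one 0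
  simpa [blocks_zero] using this

lemma blocks_pos : ∀ n : ℕ, 0 < n → 0 < blocks n := by
  intro n
  induction n using Nat.strong_induction_on with
  | _ n ih =>
    intro hn
    rcases Nat.even_or_odd n with ⟨m, hm⟩ | ⟨m, hm⟩
    · have hm' : n = 2*m := by omega
      subst hm'
      rw [blocks_two_mul]
      exact ih m (by omega) (by omega)
    · subst hm
      rw [blocks_two_mul_add_one]
      rcases Nat.eq_zero_or_pos m with h | h
      · simp [h, blocks_zero]
      · have := ih m (by omega) h
        omega

lemma blocks_pm : ∀ n : ℕ, blocks (n+1) ≤ blocks n + 1 ∧ blocks n ≤ blocks (n+1) + 1 := by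
  intro n
  induction n using Nat.strong_induction_on with
  | _ n ih =>
    rcases Nat.even_or_odd n with ⟨m, hm⟩ | ⟨m, hm⟩
    · have hm' : n = 2*m := by omega
      subst hm'
      constructor
      · rw [blocks_two_mul_add_one, blocks_two_mul]; split <;> omega
      · rw [blocks_two_mul_add_one, blocks_two_mul]; omega
    · subst hm
      have hml : m < 2*m+1 := by omega
      have h1 : 2*m+1+1 = 2*(m+1) := by ring
      constructor
      · rw [h1, blocks_two_mul, blocks_two_mul_add_one]
        have := (ih m hml).1
        split <;> omega
      · rw [h1, blocks_two_mul, blocks_two_mul_add_one]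
        rcases Nat.even_or_odd m with ⟨w, hw⟩ | ⟨w, hw⟩
        · have hw' : m = 2*w := by omega
          subst hw'
          have e1 : 2*w+1 = 2*w+1 := rfl
          have hmod : (2*w) % 2 = 0 := by omega
          rw [blocks_two_mul, show (2*w:ℕ)+1 = 2*w+1 from rfl, blocks_two_mul_add_one]
          simp [hmod]
        · subst hw
          have := (ih (2*w+1) hml).2
          split <;> omega

lemma blocks_int_pm (z : ℤ) : blocks (z+1).natAbs ≤ blocks z.natAbs + 1 ∧
    blocks (z-1).natAbs ≤ blocks z.natAbs + 1 := by
  rcases z.eq_nat_or_neg with ⟨n, rfl | rfl⟩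
  · constructor
    · have h : ((n:ℤ)+1).natAbs = n + 1 := by omega
      rw [h, Int.natAbs_natCast]
      exact (blocks_pm n).1
    · cases n with
      | zero =>
        have h : ((0:ℤ)-1).natAbs = 1 := by omega
        norm_num [h, blocks_one, blocks_zero]
      | succ m =>
        have h : (((m+1:ℕ):ℤ)-1).natAbs = m := by omega
        have h2 : ((m+1:ℕ):ℤ).natAbs = m+1 := by omega
        rw [h, h2]
        exact (blocks_pm m).2
  · have hn : (-(n:ℤ)).natAbs = n := by omega
    constructor
    · cases n with
      | zero =>
        have h : (-(0:ℕ)+1:ℤ).natAbs = 1 := by omega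
        norm_num at h ⊢
        norm_num [h, blocks_one, blocks_zero]
      | succ m =>
        have h : (-((m+1:ℕ):ℤ)+1).natAbs = m := by omega
        rw [h, hn]
        exact (blocks_pm m).2
    · have h : (-(n:ℤ)-1).natAbs = n+1 := by omega
      rw [h, hn]
      exact (blocks_pm n).1

lemma blocks_S : ∀ (n:ℕ) (σ y : ℤ), σ.natAbs ≤ n →
    blocks (2*y + σ).natAbs ≤ blocks y.natAbs + n := by
  intro n
  induction n with
  | zero =>
    intro σ y h
    have : σ = 0 := by omega
    subst this
    have h2 : (2*y+0).natAbs = 2 * y.natAbs := by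
      rw [add_zero]; rw [Int.natAbs_mul]; rfl
    rw [h2, blocks_two_mul]
    omega
  | succ n ih =>
    intro σ y h
    by_cases h0 : σ.natAbs ≤ n
    · exact le_trans (ih σ y h0) (by omega)
    · rcases lt_trichotomy σ 0 with hs | hs | hs
      · have : 2*y + σ = (2*y + (σ+1)) - 1 := by ring
        rw [this]
        have := (blocks_int_pm (2*y + (σ+1))).2
        have h2 := ih (σ+1) y (by omega)
        omega
      · omega
      · have : 2*y + σ = (2*y + (σ-1)) + 1 := by ring
        rw [this]
        have := (blocks_int_pm (2*y + (σ-1))).1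
        have h2 := ih (σ-1) y (by omega)
        omega

lemma blocks_compose : ∀ (L : ℕ) (u r : ℕ), r < 2^L →
    blocks (2^(L+1) * u + r) = blocks u + blocks r := by
  intro L
  induction L with
  | zero =>
    intro u r hr
    interval_cases r
    simp [blocks_zero, pow_one, blocks_two_mul]
  | succ L ih =>
    intro u r hr
    have hsplit : r = 2 * (r/2) + r % 2 := by omega
    have hr2 : r / 2 < 2^L := by
      have : (2:ℕ)^(L+1) = 2 * 2^L := by ring
      omega
    have hpw : (2:ℕ)^(L+1+1) * u = 2 * (2^(L+1) * u) := by ring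
    have hpw2 : (2:ℕ)^(L+1) * u = 2 * (2^L * u) := by ring
    rcases Nat.even_or_odd r with ⟨m, hm⟩ | ⟨m, hm⟩
    · have hm' : r = 2 * (r/2) := by omega
      have key : 2^(L+1+1) * u + r = 2 * (2^(L+1) * u + r/2) := by omega
      rw [key, blocks_two_mul, ih u (r/2) hr2]
      conv_rhs => rw [hm', blocks_two_mul]
    · have hm' : r = 2 * (r/2) + 1 := by omega
      have key : 2^(L+1+1) * u + r = 2 * (2^(L+1) * u + r/2) + 1 := by omega
      rw [key, blocks_two_mul_add_one, ih u (r/2) hr2]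
      have hpar : (2^(L+1) * u + r/2) % 2 = (r/2) % 2 := by omega
      rw [hpar]
      conv_rhs => rw [hm', blocks_two_mul_add_one]
      ring

def Ak' : ℕ → ℕ
  | 0 => 0
  | (k+1) => 4 * Ak' k + 1

lemma blocks_Ak' : ∀ k, blocks (Ak' k) = k := by
  intro k
  induction k with
  | zero => exact blocks_zero
  | succ k ih =>
    show blocks (4 * Ak' k + 1) = k + 1
    have : 4 * Ak' k + 1 = 2 * (2 * Ak' k) + 1 := by ring
    rw [this, blocks_two_mul_add_one, blocks_two_mul, ih]
    simp [Nat.mul_mod_right]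

lemma natAbs_two_pow (a : ℕ) : ((2:ℤ)^a).natAbs = 2^a := by
  rw [Int.natAbs_pow]; rfl

lemma half_pow_pos (b : ℕ) : ((2:ℤ)^(b+1)) / 2 = 2^b := by
  rw [pow_succ]
  exact Int.mul_ediv_cancel _ two_ne_zero

lemma half_pow_neg (b : ℕ) : (-(2:ℤ)^(b+1)) / 2 = -2^b := by
  rw [pow_succ, ← neg_mul]
  exact Int.mul_ediv_cancel _ two_ne_zero

lemma natAbs_msum_le (M : Multiset ℤ) : M.sum.natAbs ≤ (M.map Int.natAbs).sum := by
  induction M using Multiset.induction_on with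
  | empty => simp
  | cons a M ih =>
    simp only [Multiset.sum_cons, Multiset.map_cons]
    calc (a + M.sum).natAbs ≤ a.natAbs + M.sum.natAbs := Int.natAbs_add_le _ _
    _ ≤ a.natAbs + (M.map Int.natAbs).sum := by omega

lemma lemmaN : ∀ (N : ℕ) (M : Multiset ℤ),
    Multiset.card M + (M.map Int.natAbs).sum ≤ N →
    (∀ z ∈ M, ∃ a : ℕ, z = 2^a ∨ z = -(2^a)) →
    blocks M.sum.natAbs ≤ Multiset.card M := by
  intro N
  induction N with
  | zero =>
    intro M hm hpow
    have : M = 0 := by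
      rcases Multiset.empty_or_exists_mem M with h | ⟨z, hz⟩
      · exact h
      · exfalso
        have := Multiset.card_pos_iff_exists_mem.2 ⟨z, hz⟩
        omega
    subst this
    simp [blocks_zero]
  | succ N ih =>
    intro M hm hpow
    rcases Multiset.empty_or_exists_mem M with h | ⟨z0, hz0⟩
    · subst h; simp [blocks_zero]
    have hMcard : 0 < Multiset.card M := Multiset.card_pos_iff_exists_mem.2 ⟨z0, hz0⟩
    classical
    set p : ℤ → Prop := fun z => z.natAbs = 1 with hp
    set M0 := M.filter p with hM0
    set M1 := M.filter (fun z => ¬ p z) with hM1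
    have hsplit : M0 + M1 = M := Multiset.filter_add_not p M
    -- facts about M1 elements
    have hM1mem : ∀ z ∈ M1, ∃ a : ℕ, 1 ≤ a ∧ (z = 2^a ∨ z = -(2^a)) := by
      intro z hz
      rw [hM1, Multiset.mem_filter] at hz
      have hzM : z ∈ M := hz.1
      have hnp : ¬ p z := hz.2
      obtain ⟨a, ha⟩ := hpow z hzM
      refine ⟨a, ?_, ha⟩
      rcases Nat.eq_zero_or_pos a with h0 | h1
      · exfalso; subst h0; rcases ha with rfl | rfl <;> simp [hp] at hnp
      · exact h1
    -- halved multiset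
    set M1' := M1.map (fun z => z / 2) with hM1'
    have hM1even : ∀ z ∈ M1, 2 * (z / 2) = z := by
      intro z hz
      obtain ⟨a, ha1, ha⟩ := hM1mem z hz
      obtain ⟨b, rfl⟩ : ∃ b, a = b + 1 := ⟨a - 1, by omega⟩
      rcases ha with rfl | rfl
      · rw [half_pow_pos]; rw [pow_succ]; ring
      · rw [half_pow_neg]; rw [pow_succ]; ring
    have hsum1 : M1.sum = 2 * M1'.sum := by
      rw [hM1']
      rw [← Multiset.sum_map_mul_left]
      conv_lhs => rw [show M1.sum = (M1.map id).sum from by rw [Multiset.map_id]]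
      apply congrArg
      apply Multiset.map_congr rfl
      intro z hz
      exact (hM1even z hz).symm
    have hM1'pow : ∀ z ∈ M1', ∃ a : ℕ, z = 2^a ∨ z = -(2^a) := by
      intro z hz
      rw [hM1'] at hz
      obtain ⟨w, hw, rfl⟩ := Multiset.mem_map.1 hz
      obtain ⟨a, ha1, ha⟩ := hM1mem w hw
      obtain ⟨b, rfl⟩ : ∃ b, a = b + 1 := ⟨a - 1, by omega⟩
      refine ⟨b, ?_⟩
      rcases ha with rfl | rfl
      · left; exact half_pow_pos b
      · right; exact half_pow_neg b
    have hM1'abs : (M1'.map Int.natAbs).sum + Multiset.card M1 ≤ (M1.map Int.natAbs).sum := by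
      rw [hM1', Multiset.map_map]
      have : ∀ z ∈ M1, (Int.natAbs ∘ (fun z => z/2)) z + 1 ≤ z.natAbs := by
        intro z hz
        obtain ⟨a, ha1, ha⟩ := hM1mem z hz
        have h2 : 2 * (z/2) = z := hM1even z hz
        have h3 : 2 * (z/2).natAbs = z.natAbs := by
          conv_rhs => rw [← h2]
          rw [Int.natAbs_mul]; rfl
        have hzabs : 1 < z.natAbs := by
          have h4 : (2:ℕ) ≤ 2^a := by
            calc (2:ℕ) = 2^1 := by norm_num
            _ ≤ 2^a := Nat.pow_le_pow_right (by norm_num) ha1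
          rcases ha with rfl | rfl
          · rw [natAbs_two_pow]; omega
          · rw [Int.natAbs_neg, natAbs_two_pow]; omega
        simp only [Function.comp]
        omega
      -- sum the pointwise inequality
      calc (M1.map (Int.natAbs ∘ (fun z => z/2))).sum + Multiset.card M1
          = (M1.map (fun z => (Int.natAbs ∘ (fun w => w/2)) z + 1)).sum := by
            rw [Multiset.sum_map_add]
            simp [Multiset.map_const', Multiset.sum_replicate]
        _ ≤ (M1.map Int.natAbs).sum := Multiset.sum_map_le_sum_map _ _ this
    by_cases hM0e : M0 = 0
    · -- all elements have natAbs ≥ 2 : strip a factor 2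
      have hM1M : M1 = M := by rw [← hsplit, hM0e, zero_add]
      have hcard : Multiset.card M1' = Multiset.card M := by
        rw [hM1', Multiset.card_map, hM1M]
      have hmeas : Multiset.card M1' + (M1'.map Int.natAbs).sum ≤ N := by
        rw [hM1M] at hM1'abs
        omega
      have hrec := ih M1' hmeas hM1'pow
      have : M.sum = 2 * M1'.sum := by rw [← hM1M]; exact hsum1
      rw [this]
      have habs : (2 * M1'.sum).natAbs = 2 * M1'.sum.natAbs := by
        rw [Int.natAbs_mul]; rfl
      rw [habs, blocks_two_mul]
      omega
    · -- at least one ±1 element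
      have hM0card : 0 < Multiset.card M0 := by
        rcases Multiset.empty_or_exists_mem M0 with h | ⟨z, hz⟩
        · exact absurd h hM0e
        · exact Multiset.card_pos_iff_exists_mem.2 ⟨z, hz⟩
      have hσ : M0.sum.natAbs ≤ Multiset.card M0 := by
        refine le_trans (natAbs_msum_le M0) ?_
        have : ∀ z ∈ M0, z.natAbs = 1 := by
          intro z hz
          rw [hM0, Multiset.mem_filter] at hz
          exact hz.2
        have : M0.map Int.natAbs = M0.map (fun _ => 1) := Multiset.map_congr rfl this
        rw [this]
        simp [Multiset.map_const', Multiset.sum_replicate]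
      have hcards : Multiset.card M0 + Multiset.card M1 = Multiset.card M := by
        rw [← hsplit]; simp
      have habs_split : (M0.map Int.natAbs).sum + (M1.map Int.natAbs).sum
          = (M.map Int.natAbs).sum := by
        conv_rhs => rw [← hsplit]
        simp
      have hmeas : Multiset.card M1' + (M1'.map Int.natAbs).sum ≤ N := by
        have hcard1' : Multiset.card M1' = Multiset.card M1 := Multiset.card_map _ _
        omega
      have hrec := ih M1' hmeas hM1'pow
      have hsum : M.sum = 2 * M1'.sum + M0.sum := by
        rw [← hsplit]; simp [hsum1]; ring
      rw [hsum]
      have := blocks_S (Multiset.card M0) M0.sum M1'.sum hσ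
      have hcard1' : Multiset.card M1' = Multiset.card M1 := Multiset.card_map _ _
      omega

lemma lemmaN' (M : Multiset ℤ) (h : ∀ z ∈ M, ∃ a : ℕ, z = 2^a ∨ z = -(2^a)) :
    blocks M.sum.natAbs ≤ Multiset.card M :=
  lemmaN (Multiset.card M + (M.map Int.natAbs).sum) M le_rfl h

lemma key_blocks (t k : ℕ) (ht : 1 ≤ t) (hk : 1 ≤ k) (hkt : 2*k ≤ 2^(t-1)) (C : ℤ)
    (hC : C.natAbs ≤ 2*k - 1) :
    k + 1 ≤ blocks ((2^t + 2^(t+2) * (Ak' k : ℤ)) - C).natAbs := by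
  have c1 : ((2:ℕ)^(t-1) : ℤ) = (2:ℤ)^(t-1) := by push_cast; ring
  have c2 : (2:ℤ)^t = 2 * 2^(t-1) := by
    conv_lhs => rw [show t = (t-1)+1 from by omega, pow_succ]
    ring
  have c3 : (2:ℤ)^(t+1) = 2 * 2^t := by rw [pow_succ]; ring
  have c4 : ((2:ℕ)^(t+1) : ℤ) = (2:ℤ)^(t+1) := by push_cast; ring
  have c5 : ((2:ℕ)^(t+2) : ℤ) = (2:ℤ)^(t+2) := by push_cast; ring
  have c6 : (2:ℤ)^(t+2) = 2 * 2^(t+1) := by rw [pow_succ]; ring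
  set R : ℤ := 2^t - C with hR
  have hRpos : 0 < R := by omega
  have hRlt : R < 2^(t+1) := by omega
  have hval : (2^t + 2^(t+2) * (Ak' k : ℤ)) - C = 2^(t+2) * (Ak' k : ℤ) + R := by
    rw [hR]; ring
  rw [hval]
  have hAcast : (0:ℤ) ≤ (Ak' k : ℤ) := by positivity
  have habs : ((2:ℤ)^(t+2) * (Ak' k : ℤ) + R).natAbs = 2^(t+2) * Ak' k + R.toNat := by
    have hnn : 0 ≤ (2:ℤ)^(t+2) * (Ak' k : ℤ) + R := by positivity
    have hmulcast : ((2^(t+2) * Ak' k : ℕ) : ℤ) = (2:ℤ)^(t+2) * (Ak' k : ℤ) := by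
      push_cast; ring
    omega
  rw [habs]
  have hRsmall : R.toNat < 2^(t+1) := by omega
  have hcomp : 2^(t+2) * Ak' k + R.toNat = 2^((t+1)+1) * Ak' k + R.toNat := by ring_nf
  rw [hcomp, blocks_compose (t+1) (Ak' k) R.toNat hRsmall]
  rw [blocks_Ak']
  have : 0 < blocks R.toNat := blocks_pos _ (by omega)
  omega

noncomputable instance (q d : ℕ) : Fintype (QV q d) := Fintype.ofFinite _

variable {d : ℕ}

def root (d : ℕ) : QV 2 d := ⟨[], by simp⟩

def par (v : QV 2 d) : QV 2 d :=
  ⟨v.val.dropLast, by rw [List.length_dropLast]; exact le_trans (Nat.sub_le _ _) v.property⟩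

lemma val_ne_nil {v : QV 2 d} (hv : v ≠ root d) : v.val ≠ [] :=
  fun hn => hv (Subtype.ext hn)

lemma par_decomp {v : QV 2 d} (hv : v ≠ root d) :
    v.val = (par v).val ++ [v.val.getLast (val_ne_nil hv)] :=
  (List.dropLast_append_getLast (val_ne_nil hv)).symm

lemma len_par {v : QV 2 d} (hv : v ≠ root d) :
    v.val.length = (par v).val.length + 1 := by
  have := congrArg List.length (par_decomp hv)
  simpa using this

def ht (v : QV 2 d) : ℕ := d - v.val.length

def wt (v : QV 2 d) : ℤ := 2^(ht v + 1) - 1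

noncomputable def mb (S : Finset (QV 2 d)) (v : QV 2 d) : ℤ := if v ∈ S then 1 else 0

def chl (x : QV 2 d) (a : Fin 2) (h : x.val.length < d) : QV 2 d :=
  ⟨x.val ++ [a], by rw [List.length_append]; simpa using h⟩

lemma chl_ne_root (x : QV 2 d) (a : Fin 2) (h : x.val.length < d) :
    chl x a h ≠ root d := by
  intro hc
  have := congrArg (fun v : QV 2 d => v.val.length) hc
  simp [chl, root] at this

lemma par_chl (x : QV 2 d) (a : Fin 2) (h : x.val.length < d) :
    par (chl x a h) = x := by
  apply Subtype.ext
  show (x.val ++ [a]).dropLast = x.val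
  exact List.dropLast_concat ..

lemma chl_inj (x : QV 2 d) (h : x.val.length < d) : chl x 0 h ≠ chl x 1 h := by
  intro hc
  have : x.val ++ [(0 : Fin 2)] = x.val ++ [(1 : Fin 2)] := congrArg Subtype.val hc
  simp at this

lemma childfiber (x : QV 2 d) :
    Finset.univ.filter (fun v : QV 2 d => v ≠ root d ∧ par v = x) =
      if h : x.val.length < d then {chl x 0 h, chl x 1 h} else ∅ := by
  by_cases h : x.val.length < d
  · rw [dif_pos h]
    ext v
    simp only [mem_filter, mem_univ, true_and, mem_insert, mem_singleton]
    constructor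
    · rintro ⟨hv, hp⟩
      have hdec := par_decomp hv
      rw [hp] at hdec
      obtain ⟨a, hdec⟩ : ∃ a : Fin 2, v.val = x.val ++ [a] := ⟨_, hdec⟩
      have hv2 : v = chl x a h := Subtype.ext hdec
      fin_cases a
      · left; exact hv2
      · right; exact hv2
    · rintro (rfl | rfl)
      · exact ⟨chl_ne_root x 0 h, par_chl x 0 h⟩
      · exact ⟨chl_ne_root x 1 h, par_chl x 1 h⟩
  · rw [dif_neg h]
    ext v
    simp only [mem_filter, mem_univ, true_and, notMem_empty, iff_false, not_and]
    intro hv hp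
    have h1 := len_par hv
    rw [hp] at h1
    have h2 := v.property
    omega

lemma ht_child {v : QV 2 d} (hv : v ≠ root d) : ht v + 1 = ht (par v) := by
  have h1 := len_par hv
  have h2 := v.property
  simp only [ht]
  omega

lemma wt_child {v : QV 2 d} (hv : v ≠ root d) : wt v = 2^(ht (par v)) - 1 := by
  rw [wt, ht_child hv]

lemma sum_wt_children (x : QV 2 d) :
    ∑ v ∈ Finset.univ.filter (fun v : QV 2 d => v ≠ root d ∧ par v = x), wt v
      = wt x - 1 := by
  rw [childfiber]
  by_cases h : x.val.length < d
  · rw [dif_pos h, Finset.sum_pair (chl_inj x h)]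
    have h0 : wt (chl x 0 h) = 2^(ht x) - 1 := by
      rw [wt_child (chl_ne_root x 0 h), par_chl]
    have h1 : wt (chl x 1 h) = 2^(ht x) - 1 := by
      rw [wt_child (chl_ne_root x 1 h), par_chl]
    rw [h0, h1, wt, pow_succ]
    ring
  · rw [dif_neg h]
    have hx : ht x = 0 := by
      have := x.property
      simp only [ht]; omega
    rw [Finset.sum_empty, wt, hx]
    norm_num

lemma telescope (S : Finset (QV 2 d)) :
    (∑ v : QV 2 d, mb S v) =
      mb S (root d) * wt (root d) +
        ∑ v ∈ Finset.univ.erase (root d), (mb S v - mb S (par v)) * wt v := by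
  have fib := Finset.sum_fiberwise_of_maps_to
    (s := Finset.univ.erase (root d)) (t := Finset.univ) (g := par)
    (fun x _ => mem_univ _) (fun v => mb S (par v) * wt v)
  have inner : ∀ x : QV 2 d,
      ∑ v ∈ (Finset.univ.erase (root d)).filter (fun v => par v = x),
        mb S (par v) * wt v = mb S x * (wt x - 1) := by
    intro x
    have hset : (Finset.univ.erase (root d)).filter (fun v => par v = x)
        = Finset.univ.filter (fun v : QV 2 d => v ≠ root d ∧ par v = x) := by
      ext v
      simp [mem_erase, and_comm, and_assoc]
    rw [hset]
    have : ∑ v ∈ Finset.univ.filter (fun v : QV 2 d => v ≠ root d ∧ par v = x),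
        mb S (par v) * wt v
        = ∑ v ∈ Finset.univ.filter (fun v : QV 2 d => v ≠ root d ∧ par v = x),
        mb S x * wt v := by
      apply Finset.sum_congr rfl
      intro v hv
      rw [mem_filter] at hv
      rw [hv.2.2]
    rw [this, ← Finset.mul_sum, sum_wt_children]
  rw [Finset.sum_congr rfl (fun x _ => inner x)] at fib
  have e1 : ∑ v ∈ Finset.univ.erase (root d), mb S v * wt v
      = (∑ v : QV 2 d, mb S v * wt v) - mb S (root d) * wt (root d) :=
    Finset.sum_erase_eq_sub (mem_univ _)
  have e2 : ∑ v ∈ Finset.univ.erase (root d), (mb S v - mb S (par v)) * wt v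
      = (∑ v ∈ Finset.univ.erase (root d), mb S v * wt v)
        - ∑ v ∈ Finset.univ.erase (root d), mb S (par v) * wt v := by
    rw [← Finset.sum_sub_distrib]
    apply Finset.sum_congr rfl
    intro v _
    ring
  have e3 : ∑ x : QV 2 d, mb S x * (wt x - 1)
      = (∑ v : QV 2 d, mb S v * wt v) - ∑ v : QV 2 d, mb S v := by
    rw [← Finset.sum_sub_distrib]
    apply Finset.sum_congr rfl
    intro v _
    ring
  rw [e2, e1, ← fib, e3]
  ring

noncomputable def ex (S : Finset (QV 2 d)) (x : QV 2 d) : ℕ :=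
  (Finset.univ.filter (fun c : QV 2 d => c ≠ root d ∧ par c = x ∧ c ∈ S)).card

noncomputable def pix (S : Finset (QV 2 d)) (x : QV 2 d) : ℤ :=
  if x ≠ root d ∧ par x ∈ S then 1 else 0

noncomputable def BdF (S : Finset (QV 2 d)) : Finset (QV 2 d) :=
  Finset.univ.filter (fun x => x ∉ S ∧ ∃ u ∈ S, (qTree 2 d).Adj u x)

lemma ex_le_two (S : Finset (QV 2 d)) (x : QV 2 d) : ex S x ≤ 2 := by
  have hsub : Finset.univ.filter (fun c : QV 2 d => c ≠ root d ∧ par c = x ∧ c ∈ S)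
      ⊆ Finset.univ.filter (fun v : QV 2 d => v ≠ root d ∧ par v = x) := by
    intro c hc
    rw [mem_filter] at hc ⊢
    exact ⟨hc.1, hc.2.1, hc.2.2.1⟩
  have := Finset.card_le_card hsub
  rw [childfiber] at this
  by_cases h : x.val.length < d
  · rw [dif_pos h] at this
    refine le_trans this (le_trans (Finset.card_insert_le _ _) ?_)
    simp
  · rw [dif_neg h] at this
    simp only [Finset.card_empty, Nat.le_zero] at this
    simp [ex, this]

lemma cross_term (S : Finset (QV 2 d)) (v : QV 2 d) :
    (mb S v - mb S (par v)) * wt v =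
      (if v ∈ S ∧ par v ∉ S then wt v else 0)
        - (if v ∉ S ∧ par v ∈ S then wt v else 0) := by
  by_cases h1 : v ∈ S <;> by_cases h2 : par v ∈ S <;> simp [mb, h1, h2]

lemma P1_eq (S : Finset (QV 2 d)) :
    ∑ v ∈ Finset.univ.erase (root d), (if v ∈ S ∧ par v ∉ S then wt v else 0)
      = ∑ x : QV 2 d, (if x ∉ S then (ex S x : ℤ) * (2^(ht x) - 1) else 0) := by
  have fib := Finset.sum_fiberwise_of_maps_to
    (s := Finset.univ.erase (root d)) (t := Finset.univ) (g := par)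
    (fun x _ => mem_univ _) (fun v => if v ∈ S ∧ par v ∉ S then wt v else 0)
  rw [← fib]
  apply Finset.sum_congr rfl
  intro x _
  by_cases hx : x ∈ S
  · rw [if_neg (by simp [hx])]
    apply Finset.sum_eq_zero
    intro v hv
    rw [mem_filter] at hv
    rw [if_neg]
    rw [hv.2]
    tauto
  · rw [if_pos hx]
    have hstep : ∀ v ∈ (Finset.univ.erase (root d)).filter (fun v => par v = x),
        (if v ∈ S ∧ par v ∉ S then wt v else 0) = (if v ∈ S then (2:ℤ)^(ht x) - 1 else 0) := by
      intro v hv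
      rw [mem_filter, mem_erase] at hv
      by_cases hvS : v ∈ S
      · rw [if_pos ⟨hvS, by rw [hv.2]; exact hx⟩, if_pos hvS]
        rw [wt_child hv.1.1, hv.2]
      · rw [if_neg (by tauto), if_neg hvS]
    rw [Finset.sum_congr rfl hstep]
    rw [← Finset.sum_filter]
    have hset : ((Finset.univ.erase (root d)).filter (fun v => par v = x)).filter (fun v => v ∈ S)
        = Finset.univ.filter (fun c : QV 2 d => c ≠ root d ∧ par c = x ∧ c ∈ S) := by
      ext c
      simp only [mem_filter, mem_erase, mem_univ, true_and]
      tauto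
    rw [hset, Finset.sum_const, ex]
    rw [nsmul_eq_mul]

lemma P2_eq (S : Finset (QV 2 d)) :
    ∑ v ∈ Finset.univ.erase (root d), (if v ∉ S ∧ par v ∈ S then wt v else 0)
      = ∑ x : QV 2 d, (if x ∉ S then pix S x * wt x else 0) := by
  rw [← Finset.sum_erase (Finset.univ) (a := root d) (f := fun x : QV 2 d =>
      if x ∉ S then pix S x * wt x else 0) (by simp [pix])]
  apply Finset.sum_congr rfl
  intro v hv
  rw [mem_erase] at hv
  by_cases h1 : v ∈ S <;> by_cases h2 : par v ∈ S <;>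
    simp [pix, h1, h2, hv.1]

lemma identity (S : Finset (QV 2 d)) :
    (S.card : ℤ) = mb S (root d) * (2^(d+1) - 1)
      + ∑ x ∈ BdF S, ((ex S x : ℤ) * (2^(ht x) - 1) - pix S x * (2^(ht x + 1) - 1)) := by
  have hcard : (∑ v : QV 2 d, mb S v) = (S.card : ℤ) := by
    rw [show (fun v : QV 2 d => mb S v) = fun v => if v ∈ S then (1:ℤ) else 0 from rfl]
    rw [Finset.sum_ite_mem, Finset.univ_inter, Finset.sum_const, nsmul_eq_mul, mul_one]
  have htel := telescope S
  have hcross : ∑ v ∈ Finset.univ.erase (root d), (mb S v - mb S (par v)) * wt v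
      = ∑ x : QV 2 d, (if x ∉ S then (ex S x : ℤ) * (2^(ht x) - 1) - pix S x * wt x else 0) := by
    rw [Finset.sum_congr rfl (fun v _ => cross_term S v), Finset.sum_sub_distrib,
      P1_eq, P2_eq, ← Finset.sum_sub_distrib]
    apply Finset.sum_congr rfl
    intro x _
    by_cases hx : x ∈ S <;> simp [hx]
  have hroot : wt (root d) = 2^(d+1) - 1 := by
    simp [wt, ht, root]
  have hres : ∑ x : QV 2 d, (if x ∉ S then (ex S x : ℤ) * (2^(ht x) - 1) - pix S x * wt x else 0)
      = ∑ x ∈ BdF S, ((ex S x : ℤ) * (2^(ht x) - 1) - pix S x * (2^(ht x + 1) - 1)) := by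
    rw [← Finset.sum_subset (Finset.subset_univ (BdF S))]
    · apply Finset.sum_congr rfl
      intro x hx
      rw [BdF, mem_filter] at hx
      rw [if_pos hx.2.1, wt]
    · intro x _ hx
      rw [BdF, mem_filter] at hx
      by_cases hxS : x ∈ S
      · rw [if_neg (by simp [hxS])]
      · rw [if_pos hxS]
        have hnb : ¬ ∃ u ∈ S, (qTree 2 d).Adj u x := by
          intro hex
          exact hx ⟨mem_univ x, hxS, hex⟩
        have hex0 : ex S x = 0 := by
          rw [ex, Finset.card_eq_zero, Finset.filter_eq_empty_iff]
          intro c _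
          rintro ⟨hc1, hc2, hc3⟩
          apply hnb
          refine ⟨c, hc3, Or.inr ⟨c.val.getLast (val_ne_nil hc1), ?_⟩⟩
          rw [← hc2]
          exact par_decomp hc1
        have hpix0 : pix S x = 0 := by
          rw [pix, if_neg]
          rintro ⟨hx1, hx2⟩
          apply hnb
          refine ⟨par x, hx2, Or.inl ⟨x.val.getLast (val_ne_nil hx1), par_decomp hx1⟩⟩
        rw [hex0, hpix0]
        norm_num
  rw [← hcard, htel, hcross, hres, hroot]


lemma border_card_ge {d : ℕ} (t k : ℕ) (ht1 : 1 ≤ t) (hk : 1 ≤ k) (h2k : 2*k ≤ 2^(t-1))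
    (S : Finset (QV 2 d)) (hS : (S.card : ℤ) = 2^t + 2^(t+2) * (Ak' k : ℤ)) :
    k ≤ (BdF S).card := by
  by_contra hb
  push_neg at hb
  set b := (BdF S).card with hbdef
  set ρ : QV 2 d → ℤ := fun x => ((ex S x : ℤ) - 2 * pix S x) * 2^(ht x) with hρ
  set cx : QV 2 d → ℤ := fun x => pix S x - (ex S x : ℤ) with hcx
  have hterm : ∀ x : QV 2 d,
      (ex S x : ℤ) * (2^(ht x) - 1) - pix S x * (2^(ht x + 1) - 1) = ρ x + cx x := by
    intro x
    rw [hρ, hcx, pow_succ]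
    ring
  have hid := identity S
  rw [Finset.sum_congr rfl (fun x _ => hterm x), Finset.sum_add_distrib] at hid
  set Cc : ℤ := (∑ x ∈ BdF S, cx x) - mb S (root d) with hCc
  set M : Multiset ℤ :=
    (((BdF S).val.map ρ).filter (· ≠ 0)) +
      (if root d ∈ S then ({(2:ℤ)^(d+1)} : Multiset ℤ) else 0) with hM
  have hfil : (((BdF S).val.map ρ).filter (· ≠ 0)).sum = ∑ x ∈ BdF S, ρ x := by
    have hsplit := Multiset.filter_add_not (fun z => z ≠ (0:ℤ)) ((BdF S).val.map ρ)
    have hzero : (((BdF S).val.map ρ).filter (fun z => ¬ z ≠ (0:ℤ))).sum = 0 := by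
      apply Multiset.sum_eq_zero
      intro z hz
      have := Multiset.of_mem_filter hz
      tauto
    have hsum := congrArg Multiset.sum hsplit
    rw [Multiset.sum_add, hzero, add_zero] at hsum
    rw [hsum, Finset.sum]
  have hifsum : (if root d ∈ S then ({(2:ℤ)^(d+1)} : Multiset ℤ) else 0).sum
      = mb S (root d) * 2^(d+1) := by
    by_cases hr : root d ∈ S <;> simp [hr, mb]
  have hMsum : M.sum = (S.card : ℤ) - Cc := by
    rw [hM, Multiset.sum_add, hfil, hifsum, hCc]
    have hmb : mb S (root d) * ((2:ℤ)^(d+1) - 1)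
        = mb S (root d) * 2^(d+1) - mb S (root d) := by ring
    rw [hmb] at hid
    omega
  have hMcard : Multiset.card M ≤ b + 1 := by
    rw [hM, Multiset.card_add]
    have h1 : Multiset.card (((BdF S).val.map ρ).filter (· ≠ 0))
        ≤ Multiset.card ((BdF S).val.map ρ) := Multiset.card_le_card (Multiset.filter_le _ _)
    rw [Multiset.card_map] at h1
    have h2 : Multiset.card (if root d ∈ S then ({(2:ℤ)^(d+1)} : Multiset ℤ) else 0) ≤ 1 := by
      by_cases hr : root d ∈ S <;> simp [hr]
    have h3 : Multiset.card (BdF S).val = b := rfl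
    omega
  have hMpow : ∀ z ∈ M, ∃ a : ℕ, z = 2^a ∨ z = -(2^a) := by
    intro z hz
    rw [hM, Multiset.mem_add] at hz
    rcases hz with hz | hz
    · rw [Multiset.mem_filter] at hz
      obtain ⟨hzm, hz0⟩ := hz
      obtain ⟨x, hx, rfl⟩ := Multiset.mem_map.1 hzm
      have hex := ex_le_two S x
      have hpix : pix S x = 0 ∨ pix S x = 1 := by
        rw [pix]; split <;> simp
      have hg : ((ex S x : ℤ) - 2 * pix S x) = -2 ∨ ((ex S x : ℤ) - 2 * pix S x) = -1
          ∨ ((ex S x : ℤ) - 2 * pix S x) = 1 ∨ ((ex S x : ℤ) - 2 * pix S x) = 2 := by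
        have hg0 : ((ex S x : ℤ) - 2 * pix S x) ≠ 0 := by
          intro h0
          apply hz0
          rw [hρ]
          simp only []
          rw [h0, zero_mul]
        omega
      rw [hρ]
      simp only []
      rcases hg with hg | hg | hg | hg <;> rw [hg]
      · exact ⟨ht x + 1, Or.inr (by rw [pow_succ]; ring)⟩
      · exact ⟨ht x, Or.inr (by ring)⟩
      · exact ⟨ht x, Or.inl (by ring)⟩
      · exact ⟨ht x + 1, Or.inl (by rw [pow_succ]; ring)⟩
    · have : z = 2^(d+1) := by
        by_cases hr : root d ∈ S
        · rw [if_pos hr] at hz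
          simpa using hz
        · rw [if_neg hr] at hz
          simp at hz
      exact ⟨d+1, Or.inl this⟩
  have hblocks := lemmaN' M hMpow
  have hcabs : Cc.natAbs ≤ 2*b + 1 := by
    have habs : |∑ x ∈ BdF S, cx x| ≤ ∑ x ∈ BdF S, |cx x| :=
      Finset.abs_sum_le_sum_abs _ _
    have hptwise : ∀ x ∈ BdF S, |cx x| ≤ 2 := by
      intro x _
      have hex := ex_le_two S x
      have hpix : pix S x = 0 ∨ pix S x = 1 := by
        rw [pix]; split <;> simp
      rw [hcx]
      simp only []
      rw [abs_le]
      constructor <;> omega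
    have hsum2 : ∑ x ∈ BdF S, |cx x| ≤ b * 2 := by
      calc ∑ x ∈ BdF S, |cx x| ≤ ∑ _x ∈ BdF S, (2:ℤ) := Finset.sum_le_sum hptwise
      _ = b * 2 := by rw [Finset.sum_const, nsmul_eq_mul]
    have habs2 : (∑ x ∈ BdF S, cx x).natAbs ≤ 2 * b := by
      have := le_trans habs hsum2
      rw [abs_le] at this
      omega
    have hmb : mb S (root d) = 0 ∨ mb S (root d) = 1 := by
      rw [mb]; split <;> simp
    rw [hCc]
    omega
  have hC2 : Cc.natAbs ≤ 2*k - 1 := by omega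
  have hkey := key_blocks t k ht1 hk h2k Cc hC2
  have hval : (2:ℤ)^t + 2^(t+2) * (Ak' k : ℤ) - Cc = M.sum := by rw [hMsum, hS]
  rw [hval] at hkey
  omega

lemma three_Ak : ∀ k, 3 * Ak' k + 1 = 4^k := by
  intro k
  induction k with
  | zero => rfl
  | succ k ih =>
    show 3 * (4 * Ak' k + 1) + 1 = 4^(k+1)
    rw [pow_succ]
    omega

def gval : List (Fin 2) → ℕ
  | [] => 0
  | a :: l => 1 + a.val + 2 * gval l

lemma gval_le : ∀ l : List (Fin 2), gval l ≤ 2^(l.length + 1) - 2 := by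
  intro l
  induction l with
  | nil => simp [gval]
  | cons a l ih =>
    show 1 + a.val + 2 * gval l ≤ 2^(l.length + 1 + 1) - 2
    have ha := a.isLt
    have hp : (2:ℕ)^(l.length + 1 + 1) = 2 * 2^(l.length+1) := by ring
    have hp2 : (1:ℕ) ≤ 2^(l.length+1) := Nat.one_le_two_pow
    omega

lemma gval_surj : ∀ d n : ℕ, n < 2^(d+1) - 1 → ∃ l : List (Fin 2), l.length ≤ d ∧ gval l = n := by
  intro d
  induction d with
  | zero =>
    intro n hn
    have h1 : (2:ℕ)^(0+1) = 2 := rfl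
    have : n = 0 := by omega
    exact ⟨[], by simp, by simp [gval, this]⟩
  | succ d ih =>
    intro n hn
    rcases Nat.eq_zero_or_pos n with h0 | h0
    · exact ⟨[], by simp, by simp [gval, h0]⟩
    · have hp : (2:ℕ)^(d+1+1) = 2 * 2^(d+1) := by ring
      have hp2 : (1:ℕ) ≤ 2^(d+1) := Nat.one_le_two_pow
      have hm : (n-1)/2 < 2^(d+1) - 1 := by omega
      obtain ⟨l', hl', hg⟩ := ih ((n-1)/2) hm
      have ha : (n-1) % 2 < 2 := Nat.mod_lt _ (by norm_num)
      refine ⟨⟨(n-1) % 2, ha⟩ :: l', by simpa using hl', ?_⟩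
      show 1 + (n-1) % 2 + 2 * gval l' = n
      rw [hg]
      omega

lemma card_QV_ge : 2^(d+1) - 1 ≤ Nat.card (QV 2 d) := by
  have hne : 0 < 2^(d+1) - 1 := by
    have : (2:ℕ) ≤ 2^(d+1) := by
      calc (2:ℕ) = 2^1 := rfl
      _ ≤ 2^(d+1) := Nat.pow_le_pow_right (by norm_num) (by omega)
    omega
  set f : QV 2 d → Fin (2^(d+1) - 1) := fun v => ⟨gval v.val, by
    have h1 := gval_le v.val
    have h2 : (2:ℕ)^(v.val.length + 1) ≤ 2^(d+1) :=
      Nat.pow_le_pow_right (by norm_num) (by have := v.property; omega)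
    omega⟩ with hf
  have hsurj : Function.Surjective f := by
    rintro ⟨n, hn⟩
    obtain ⟨l, hl, hg⟩ := gval_surj d n hn
    exact ⟨⟨l, hl⟩, by simp [hf, hg]⟩
  have := Nat.card_le_card_of_surjective f hsurj
  simpa using this

lemma k_le_isoPeak {d : ℕ} (t k : ℕ) (ht1 : 1 ≤ t) (hk : 1 ≤ k) (h2k : 2*k ≤ 2^(t-1))
    (htk : t + 2*k ≤ d) : k ≤ isoPeak (qTree 2 d) := by
  set sN : ℕ := 2^t + 2^(t+2) * Ak' k with hsN
  -- size bound
  have hsN_le : sN ≤ 2^(d+1) - 1 := by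
    have h3A := three_Ak k
    have hpow : 2^(t+2) * 4^k = 2^(t + 2*k + 2) := by
      have h4 : (4:ℕ)^k = 2^(2*k) := by
        rw [show (4:ℕ) = 2^2 from rfl, ← pow_mul]
      rw [h4, ← pow_add]
      congr 1
      ring
    have hle : (2:ℕ)^(t+2*k+2) ≤ 2^(d+2) := Nat.pow_le_pow_right (by norm_num) (by omega)
    have hd2 : (2:ℕ)^(d+2) = 2 * 2^(d+1) := by ring
    have ht2 : (2:ℕ)^t ≥ 2 := by
      calc (2:ℕ) = 2^1 := rfl
      _ ≤ 2^t := Nat.pow_le_pow_right (by norm_num) ht1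
    have htle : (2:ℕ)^t ≤ 2^(d+1) := Nat.pow_le_pow_right (by norm_num) (by omega)
    -- 3*sN = 2^(t+2k+2) - 2^t
    have h3s : 3 * sN = 2^(t+2*k+2) - 2^t := by
      have hdist : 2^(t+2)*(3*Ak' k+1) = 3*(2^(t+2)*Ak' k) + 2^(t+2) := by ring
      rw [h3A, hpow] at hdist
      have hx2 : (2:ℕ)^(t+2) = 4 * 2^t := by rw [pow_add]; ring
      omega
    omega
  have hcard := card_QV_ge (d := d)
  have hsN_card : sN ≤ Nat.card (QV 2 d) := le_trans hsN_le hcard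
  -- profile bound
  have hprof : k ≤ isoProfile (qTree 2 d) sN := by
    apply le_csInf
    · -- nonempty
      have : sN ≤ (Finset.univ : Finset (QV 2 d)).card := by
        rw [Finset.card_univ, ← Nat.card_eq_fintype_card]
        exact hsN_card
      obtain ⟨T, _, hT⟩ := Finset.exists_subset_card_eq this
      refine ⟨(vertexBorder (qTree 2 d) ↑T).ncard, Set.mem_image_of_mem _ ?_⟩
      simp only [Set.mem_setOf_eq, Set.ncard_coe_finset]
      exact hT
    · rintro y ⟨Sset, hSs, rfl⟩
      simp only [Set.mem_setOf_eq] at hSs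
      show k ≤ (vertexBorder (qTree 2 d) Sset).ncard
      have hfin : Sset.Finite := Set.toFinite _
      set Sf : Finset (QV 2 d) := hfin.toFinset with hSf
      have hcoe : (↑Sf : Set (QV 2 d)) = Sset := hfin.coe_toFinset
      have hScard : Sf.card = sN := by
        rw [← hSs, ← hcoe, Set.ncard_coe_finset]
      have hborder : vertexBorder (qTree 2 d) Sset = ↑(BdF Sf) := by
        ext x
        simp only [vertexBorder, Set.mem_setOf_eq, BdF, Finset.coe_filter,
          Finset.mem_univ, true_and, ← hcoe, Finset.mem_coe]
      rw [hborder, Set.ncard_coe_finset]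
      apply border_card_ge t k ht1 hk h2k
      rw [hScard, hsN]
      push_cast
      ring
  refine le_trans hprof ?_
  apply le_csSup
  · exact ((Set.finite_Icc 0 (Nat.card (QV 2 d))).image _).bddAbove
  · exact ⟨sN, ⟨Nat.zero_le _, hsN_card⟩, rfl⟩

end IsoAux

theorem binary_tree_iso_peak_lower (d : ℕ) (hd : 1 ≤ d) :
    (⌊(((d : ℤ) - ⌈Real.logb 2 (3 * (d : ℝ))⌉ : ℤ) : ℝ) / 2⌋ : ℤ) ≤
      (isoPeak (qTree 2 d) : ℤ) ∧
    ((d : ℝ) - Real.logb 2 d) / 2 - (3 + Real.logb 2 3) / 2 ≤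
      ((⌊(((d : ℤ) - ⌈Real.logb 2 (3 * (d : ℝ))⌉ : ℤ) : ℝ) / 2⌋ : ℤ) : ℝ) := by
  have hd0 : (0:ℝ) < d := by exact_mod_cast hd
  have hd1 : (1:ℝ) ≤ d := by exact_mod_cast hd
  have h3d : (1:ℝ) < 3 * d := by linarith
  set c : ℤ := ⌈Real.logb 2 (3 * (d : ℝ))⌉ with hc
  set F : ℤ := ⌊(((d : ℤ) - c : ℤ) : ℝ) / 2⌋ with hF
  have hcpos : 0 < c := by
    rw [hc]
    rw [Int.ceil_pos]
    exact Real.logb_pos one_lt_two h3d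
  -- part 2 first
  have hlog : Real.logb 2 (3 * d) = Real.logb 2 3 + Real.logb 2 d :=
    Real.logb_mul (by norm_num) (by positivity)
  have hceil : (c:ℝ) < Real.logb 2 (3 * d) + 1 := by
    rw [hc]; exact Int.ceil_lt_add_one _
  have hfloor : (((d : ℤ) - c : ℤ) : ℝ) / 2 - 1 < (F:ℝ) := by
    rw [hF]; exact Int.sub_one_lt_floor _
  have hcast : (((d : ℤ) - c : ℤ) : ℝ) = (d:ℝ) - (c:ℝ) := by push_cast; ring
  have part2 : ((d : ℝ) - Real.logb 2 d) / 2 - (3 + Real.logb 2 3) / 2 ≤ (F:ℝ) := by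
    rw [hcast] at hfloor
    rw [hlog] at hceil
    linarith
  refine ⟨?_, part2⟩
  -- part 1
  by_cases hF0 : F ≤ 0
  · exact le_trans hF0 (by positivity)
  · push_neg at hF0
    set t : ℕ := c.toNat with ht
    set k : ℕ := F.toNat with hk
    have hkc : (k:ℤ) = F := by omega
    have htc : (t:ℤ) = c := by omega
    have ht1 : 1 ≤ t := by omega
    have hk1 : 1 ≤ k := by omega
    -- 2F ≤ d - c
    have h2F : 2*F ≤ (d:ℤ) - c := by
      have h1 : (F:ℝ) ≤ (((d : ℤ) - c : ℤ) : ℝ) / 2 := by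
        rw [hF]; exact Int.floor_le _
      rw [hcast] at h1
      have h2 : (2*F : ℝ) ≤ (d:ℝ) - (c:ℝ) := by linarith
      exact_mod_cast h2
    have htk : t + 2*k ≤ d := by omega
    -- 3d ≤ 2^t
    have h3d2t : 3*d ≤ 2^t := by
      have h1 : Real.logb 2 (3*(d:ℝ)) ≤ (c:ℝ) := by
        rw [hc]; exact Int.le_ceil _
      have h2 : (3*(d:ℝ)) = (2:ℝ) ^ (Real.logb 2 (3*(d:ℝ))) := by
        rw [Real.rpow_logb (by norm_num) (by norm_num) (by positivity)]
      have h3 : (2:ℝ) ^ (Real.logb 2 (3*(d:ℝ))) ≤ (2:ℝ) ^ ((c:ℝ)) := by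
        apply Real.rpow_le_rpow_of_exponent_le (by norm_num) h1
      have h4 : (2:ℝ) ^ ((c:ℝ)) = ((2^t : ℕ) : ℝ) := by
        rw [← htc]
        push_cast
        rw [Real.rpow_natCast]
      have h5 : (3*(d:ℝ)) ≤ ((2^t : ℕ) : ℝ) := by
        rw [← h4]
        calc (3*(d:ℝ)) = _ := h2
          _ ≤ _ := h3
      have h6 : ((3*d : ℕ) : ℝ) ≤ ((2^t : ℕ) : ℝ) := by push_cast; push_cast at h5; linarith
      exact_mod_cast h6
    -- d ≤ 2^(t-1)
    have hdt : d ≤ 2^(t-1) := by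
      have : (2:ℕ)^t = 2 * 2^(t-1) := by
        conv_lhs => rw [show t = (t-1)+1 from by omega, pow_succ]
        ring
      omega
    have h2k : 2*k ≤ 2^(t-1) := by omega
    have := IsoAux.k_le_isoPeak (d := d) t k ht1 hk1 h2k htk
    omega
end

section
/- Let T be the complete q-ary tree of depth d (q ≥ 2, d ≥ 1) and let S ⊆ V(T) be left-ordered and down-compressed. Suppose u ∈ V(T) and i are such that Desc(u) ∩ S ∩ L_i is non-empty. Then Desc(u) ∩ S ∩ L_{i'} is non-empty for every i' with i ≤ i' ≤ d. -/
open scoped Classical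

section AuxLemmas

namespace QV

variable {q d : ℕ}

lemma lex_append {r : Fin q → Fin q → Prop} (p : List (Fin q)) {l1 l2 : List (Fin q)}
    (h : List.Lex r l1 l2) : List.Lex r (p ++ l1) (p ++ l2) := by
  induction p with
  | nil => simpa
  | cons a t ih => exact List.Lex.cons ih

lemma mem_of_leftOf_mem {S : Set (QV q d)} (hlo : LeftOrdered S) {u v : QV q d}
    (hL : LeftOf u v) (hv : v ∈ S) : u ∈ S := by
  by_contra hu
  exact hlo u.val.length u v rfl ⟨hL, Or.inl ⟨hu, hv⟩⟩

lemma adj_of_child {w x : QV q d} (h : IsChildOf w x) : (qTree q d).Adj x w := Or.inl h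

lemma mem_border {S : Set (QV q d)} {z x : QV q d} (hz : z ∉ S) (hx : x ∈ S)
    (h : (qTree q d).Adj x z) : z ∈ vertexBorder (qTree q d) S :=
  ⟨hz, x, hx, h⟩

lemma ncard_childSet (x : QV q d) (hx : x.val.length < d) :
    {z : QV q d | IsChildOf z x}.ncard = q := by
  have hset : {z : QV q d | IsChildOf z x} =
      Set.range (fun a : Fin q => (⟨x.val ++ [a], by simp; omega⟩ : QV q d)) := by
    ext z
    constructor
    · rintro ⟨a, ha⟩
      exact ⟨a, Subtype.ext ha.symm⟩
    · rintro ⟨a, rfl⟩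
      exact ⟨a, rfl⟩
  have hinj : Function.Injective
      (fun a : Fin q => (⟨x.val ++ [a], by simp; omega⟩ : QV q d)) := by
    intro a b hab
    have := congrArg Subtype.val hab
    simpa using this
  rw [hset, ← Set.image_univ]
  exact (Set.ncard_image_of_injective _ hinj).trans (by rw [Set.ncard_univ,
    Nat.card_eq_fintype_card, Fintype.card_fin])

lemma border_le {S S' B C : Set (QV q d)}
    (hsub : vertexBorder (qTree q d) S' ⊆ (vertexBorder (qTree q d) S \ B) ∪ C)
    (hB : B ⊆ vertexBorder (qTree q d) S) (hC : C.ncard ≤ B.ncard) :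
    (vertexBorder (qTree q d) S').ncard ≤ (vertexBorder (qTree q d) S).ncard := by
  have h1 : (vertexBorder (qTree q d) S').ncard ≤
      ((vertexBorder (qTree q d) S \ B) ∪ C).ncard :=
    Set.ncard_le_ncard hsub (Set.toFinite _)
  have h2 := Set.ncard_union_le (vertexBorder (qTree q d) S \ B) C
  have h3 := Set.ncard_diff hB (Set.toFinite _)
  have h4 := Set.ncard_le_ncard hB (Set.toFinite _)
  omega

end QV

end AuxLemmas

namespace QV

variable {q d : ℕ}

lemma exists_child_mem (hq : 2 ≤ q) {S : Set (QV q d)}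
    (hlo : LeftOrdered S) (hdc : DownCompressed S)
    {x : QV q d} (hx : x ∈ S) (hxd : x.val.length < d) :
    ∃ w : QV q d, IsChildOf w x ∧ w ∈ S := by
  by_contra hcon
  push_neg at hcon
  haveI : NeZero q := ⟨by omega⟩
  -- the leftmost child of x
  set c0 : QV q d := ⟨x.val ++ [(0 : Fin q)], by simp; omega⟩ with hc0def
  have hc0x : IsChildOf c0 x := ⟨0, rfl⟩
  have hc0S : c0 ∉ S := hcon c0 hc0x
  have hc0len : c0.val.length = x.val.length + 1 := by simp [hc0def]
  have hc0ne : c0 ≠ x := by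
    intro h
    have := congrArg (fun z : QV q d => z.val.length) h
    simp [hc0def] at this
  -- children of x are all in the border
  have hChB : {z : QV q d | IsChildOf z x} ⊆ vertexBorder (qTree q d) S :=
    fun z hz => mem_border (hcon z hz) hx (adj_of_child hz)
  have hfin : ∀ b : Fin q, b ≠ 0 → (0 : Fin q) < b := by
    intro b hb
    have hb' : b.val ≠ 0 := fun h => hb (Fin.ext (by simpa using h))
    exact Fin.lt_def.mpr (by simp only [Fin.val_zero]; omega)
  by_cases hg : ∃ n ∈ S, ∃ a b : Fin q, n.val = x.val ++ [a, b]
  · -- Case A: some grandchild of x is in S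
    obtain ⟨g, hgS, a, b, hgval⟩ := hg
    have hglen : g.val.length = x.val.length + 2 := by rw [hgval]; simp
    have hd2 : x.val.length + 2 ≤ d := hglen ▸ g.2
    set y0 : QV q d := ⟨x.val ++ [(0 : Fin q), (0 : Fin q)], by simp; omega⟩ with hy0def
    have hy0len : y0.val.length = x.val.length + 2 := by simp [hy0def]
    have hy0c0 : IsChildOf y0 c0 := ⟨0, by simp [hy0def, hc0def]⟩
    -- y0 ∈ S by left-orderedness
    have hy0S : y0 ∈ S := by
      by_cases haz : a = 0
      · by_cases hbz : b = 0
        · have : y0 = g := Subtype.ext (by rw [hgval, haz, hbz])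
          rw [this]; exact hgS
        · refine mem_of_leftOf_mem hlo ⟨by rw [hy0len, hglen], ?_⟩ hgS
          rw [hgval, haz, hy0def]
          exact lex_append x.val (List.Lex.cons (List.Lex.rel (hfin b hbz)))
      · refine mem_of_leftOf_mem hlo ⟨by rw [hy0len, hglen], ?_⟩ hgS
        rw [hgval, hy0def]
        exact lex_append x.val (List.Lex.rel (hfin a haz))
    have hstrict := (hdc x hx c0 hc0S).2 (by omega)
    by_cases hall : ∀ z : QV q d, IsChildOf z c0 → z ∈ S
    · -- Case A1: all children of c0 are in S: swap x with c0
      have hc0B : c0 ∈ vertexBorder (qTree q d) S := hChB hc0x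
      have hc0S' : c0 ∈ (S ∪ {c0}) \ {x} := ⟨Or.inr rfl, hc0ne⟩
      have hsub : vertexBorder (qTree q d) ((S ∪ {c0}) \ {x}) ⊆
          (vertexBorder (qTree q d) S \ {c0}) ∪ {x} := by
        rintro z ⟨hz1, n, hn, hadj⟩
        by_cases hzx : z = x
        · right; exact hzx
        left
        rcases hn.1 with hnS | hnc0
        · have hzS : z ∉ S := fun h => hz1 ⟨Or.inl h, hzx⟩
          refine ⟨mem_border hzS hnS hadj, fun hzc0 => ?_⟩
          exact hz1 (hzc0 ▸ hc0S')
        · have hnc0' : n = c0 := hnc0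
          subst hnc0'
          rcases hadj with ⟨t, hzval⟩ | ⟨t, hnval⟩
          · -- z is a child of c0, hence in S, hence in S' (z ≠ x by length)
            have hzS : z ∈ S := hall z ⟨t, hzval⟩
            have hzlen : z.val.length = x.val.length + 2 := by
              rw [hzval]; simp [hc0len]
            exact absurd ⟨Or.inl hzS, fun h => by
              rw [h] at hzlen; omega⟩ hz1
          · -- c0.val = z.val ++ [t] forces z = x
            have hlen : z.val.length = x.val.length := by
              have := congrArg List.length hnval
              simp at this; omega
            have := List.append_inj (hnval.symm.trans (rfl : c0.val = x.val ++ [(0:Fin q)])) (by omega)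
            exact absurd (Subtype.ext this.1) hzx
      have hle := border_le hsub (Set.singleton_subset_iff.mpr hc0B)
        (by simp)
      omega
    · -- Case A2: some child of c0 not in S: swap x with c0, count
      push_neg at hall
      obtain ⟨z0, hz0c, hz0S⟩ := hall
      obtain ⟨t0, ht0⟩ := hz0c
      have hz0val : z0.val = x.val ++ [(0 : Fin q), t0] := by
        rw [ht0, hc0def]; simp
      -- every grandchild of x in S is a child of c0
      have hgb : ∀ n ∈ S, ∀ a b : Fin q, n.val = x.val ++ [a, b] → a = 0 := by
        intro n hnS a b hnval
        by_contra haz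
        apply hz0S
        refine mem_of_leftOf_mem hlo ⟨?_, ?_⟩ hnS
        · rw [hz0val, hnval]; simp
        · rw [hz0val, hnval]
          exact lex_append x.val (List.Lex.rel (hfin a haz))
      have hc0S' : c0 ∈ (S ∪ {c0}) \ {x} := ⟨Or.inr rfl, hc0ne⟩
      have hsub : vertexBorder (qTree q d) ((S ∪ {c0}) \ {x}) ⊆
          (vertexBorder (qTree q d) S \ {z : QV q d | IsChildOf z x}) ∪
            ({x} ∪ ({z : QV q d | IsChildOf z c0} \ S)) := by
        rintro z ⟨hz1, n, hn, hadj⟩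
        by_cases hzx : z = x
        · right; left; exact hzx
        rcases hn.1 with hnS | hnc0
        · -- n ∈ S, n ≠ x
          have hnx : n ≠ x := hn.2
          have hzS : z ∉ S := fun h => hz1 ⟨Or.inl h, hzx⟩
          left
          refine ⟨mem_border hzS hnS hadj, fun hzCh => ?_⟩
          obtain ⟨t, hzval⟩ := hzCh
          rcases hadj with ⟨s, h1⟩ | ⟨s, h1⟩
          · -- z.val = n.val ++ [s] and z.val = x.val ++ [t] ⇒ n = x
            have hlen : n.val.length = x.val.length := by
              have e1 := congrArg List.length h1
              have e2 := congrArg List.length hzval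
              simp at e1 e2; omega
            have := List.append_inj (h1.symm.trans hzval) (by omega)
            exact hnx (Subtype.ext this.1)
          · -- n.val = z.val ++ [s] = x.val ++ [t, s]: grandchild in S ⇒ t = 0 ⇒ z = c0
            have hnval : n.val = x.val ++ [t, s] := by
              rw [h1, hzval]; simp
            have ht : t = 0 := hgb n hnS t s hnval
            have hzc0 : z = c0 := Subtype.ext (by rw [hzval, ht, hc0def])
            exact hz1 (hzc0 ▸ hc0S')
        · -- n = c0
          have hnc0' : n = c0 := hnc0
          subst hnc0'
          rcases hadj with ⟨t, hzval⟩ | ⟨t, hnval⟩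
          · -- z a child of c0
            by_cases hzS : z ∈ S
            · have hzlen : z.val.length = x.val.length + 2 := by
                rw [hzval]; simp [hc0len]
              exact absurd ⟨Or.inl hzS, fun h => by
                rw [h] at hzlen; omega⟩ hz1
            · right; right; exact ⟨⟨t, hzval⟩, hzS⟩
          · -- z = x
            have hlen : z.val.length = x.val.length := by
              have := congrArg List.length hnval
              simp at this; omega
            have := List.append_inj (hnval.symm.trans (rfl : c0.val = x.val ++ [(0:Fin q)])) (by omega)
            exact absurd (Subtype.ext this.1) hzx
      have hcard : ({x} ∪ ({z : QV q d | IsChildOf z c0} \ S)).ncard ≤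
          ({z : QV q d | IsChildOf z x}).ncard := by
        have h1 := Set.ncard_union_le ({x} : Set (QV q d))
          ({z : QV q d | IsChildOf z c0} \ S)
        have hy0mem : y0 ∈ ({z : QV q d | IsChildOf z c0} : Set (QV q d)) := hy0c0
        have hsub2 : {z : QV q d | IsChildOf z c0} \ S ⊆
            {z : QV q d | IsChildOf z c0} \ {y0} := by
          rintro z ⟨hzc, hzS⟩
          exact ⟨hzc, fun h => hzS (h ▸ hy0S)⟩
        have h2 := Set.ncard_le_ncard hsub2 (Set.toFinite _)
        have h3 := Set.ncard_diff (Set.singleton_subset_iff.mpr hy0mem) (Set.toFinite _)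
        have h4 : ({z : QV q d | IsChildOf z c0}).ncard = q :=
          ncard_childSet c0 (by omega)
        have h5 : ({z : QV q d | IsChildOf z x}).ncard = q := ncard_childSet x hxd
        simp only [Set.ncard_singleton] at *
        omega
      have hle := border_le hsub hChB hcard
      omega
  · -- Case B: no grandchild of x in S; pick a deepest vertex not in S below level of x
    push_neg at hg
    set T : Set (QV q d) := {v | v ∉ S ∧ x.val.length < v.val.length} with hTdef
    have hc0T : c0 ∈ T := ⟨hc0S, by omega⟩
    obtain ⟨w, hwT, hwmax⟩ := Set.Finite.exists_maximalFor
      (fun v : QV q d => v.val.length) T (Set.toFinite T) ⟨c0, hc0T⟩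
    have hwS : w ∉ S := hwT.1
    have hwlen : x.val.length < w.val.length := hwT.2
    -- all children of w are in S
    have hwch : ∀ ch : QV q d, IsChildOf ch w → ch ∈ S := by
      rintro ch ⟨t, hchval⟩
      by_contra hchS
      have hchlen : ch.val.length = w.val.length + 1 := by rw [hchval]; simp
      have hchT : ch ∈ T := ⟨hchS, by omega⟩
      have : ch.val.length ≤ w.val.length := hwmax hchT (by simp only []; omega)
      omega
    have hw1 : 1 ≤ w.val.length := by omega
    set pw : QV q d := ⟨w.val.dropLast, by
      have := w.2
      simp [List.length_dropLast]; omega⟩ with hpwdef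
    have hwx : w ≠ x := fun h => by rw [h] at hwlen; omega
    have hsub : vertexBorder (qTree q d) ((S ∪ {w}) \ {x}) ⊆
        (vertexBorder (qTree q d) S \ {z : QV q d | IsChildOf z x}) ∪ {x, pw} := by
      rintro z ⟨hz1, n, hn, hadj⟩
      by_cases hzx : z = x
      · right; left; exact hzx
      by_cases hzpw : z = pw
      · right; right; exact hzpw
      left
      rcases hn.1 with hnS | hnw
      · have hnx : n ≠ x := hn.2
        have hzS : z ∉ S := fun h => hz1 ⟨Or.inl h, hzx⟩
        refine ⟨mem_border hzS hnS hadj, fun hzCh => ?_⟩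
        obtain ⟨t, hzval⟩ := hzCh
        rcases hadj with ⟨s, h1⟩ | ⟨s, h1⟩
        · have hlen : n.val.length = x.val.length := by
            have e1 := congrArg List.length h1
            have e2 := congrArg List.length hzval
            simp at e1 e2; omega
          have := List.append_inj (h1.symm.trans hzval) (by omega)
          exact hnx (Subtype.ext this.1)
        · have hnval : n.val = x.val ++ [t, s] := by
            rw [h1, hzval]; simp
          exact hg n hnS t s hnval
      · have hnw' : n = w := hnw
        rw [hnw'] at hadj
        rcases hadj with ⟨t, hzval⟩ | ⟨t, hnval⟩
        · -- z is a child of w, hence in S, hence in S'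
          have hzS : z ∈ S := hwch z ⟨t, hzval⟩
          have hzlen : z.val.length = w.val.length + 1 := by rw [hzval]; simp
          exact absurd ⟨Or.inl hzS, fun h => by
            rw [h] at hzlen; omega⟩ hz1
        · -- w.val = z.val ++ [t] ⇒ z = pw
          refine absurd (Subtype.ext ?_) hzpw
          show z.val = w.val.dropLast
          rw [hnval, List.dropLast_concat]
    have hcard : ({x, pw} : Set (QV q d)).ncard ≤
        ({z : QV q d | IsChildOf z x}).ncard := by
      have h1 : ({x, pw} : Set (QV q d)).ncard ≤ 2 := by
        have := Set.ncard_insert_le x ({pw} : Set (QV q d))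
        simp at this ⊢; omega
      have h5 : ({z : QV q d | IsChildOf z x}).ncard = q := ncard_childSet x hxd
      omega
    have hle := border_le hsub hChB hcard
    have hstrict := (hdc x hx w hwS).2 hwlen
    omega

end QV

theorem down_compressed_desc_all_levels (q d : ℕ) (hq : 2 ≤ q) (hd : 1 ≤ d)
    (S : Set (QV q d)) (hlo : QV.LeftOrdered S) (hdc : QV.DownCompressed S)
    (u : QV q d) (i : ℕ) (h : (QV.desc u ∩ S ∩ QV.level q d i).Nonempty) :
    ∀ i', i ≤ i' → i' ≤ d → (QV.desc u ∩ S ∩ QV.level q d i').Nonempty := by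
  intro i' hii'
  induction i', hii' using Nat.le_induction with
  | base => exact fun _ => h
  | succ n hn ih =>
    intro hsd
    obtain ⟨w, ⟨hwdesc, hwS⟩, hwlev⟩ := ih (by omega)
    have hwlen : w.val.length = n := hwlev
    have hwd : w.val.length < d := by omega
    obtain ⟨c, ⟨a, hcval⟩, hcS⟩ := QV.exists_child_mem hq hlo hdc hwS hwd
    refine ⟨c, ⟨?_, hcS⟩, ?_⟩
    · exact List.IsPrefix.trans hwdesc ⟨[a], hcval.symm⟩
    · show c.val.length = n + 1
      rw [hcval]; simp [hwlen]
end
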